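/- arXiv:1908.08653 — 3 statements merged into one kernel-verified Lean document; each statement's English description precedes it below -/
import Mathlib

section
/- Let τ ∈ ℤ and let μ = (μ₁,…,μ_l) be a partition with l = l(μ) ≥ 3 parts. For each positive integer d dividing every part of μ, define K^τ_{μ/d} := (-1)^{(|μ|/d)τ}·(τ(τ+1))^{l−1}·(∏_{i=1}^{l} binom((μ_i/d)(τ+1) − 1, μ_i/d − 1))·(|μ|/d)^{l−3}. Then K^τ_{μ/d} is an integer, and the number n_{μ,0,|μ|/2}(τ) := (-1)^{l}·Σ_{d | gcd(μ₁,…,μ_l)} μ(d)·d^{l−1}·K^τ_{μ/d} is an integer. -/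
open Finset

/-- The generalized binomial coefficient `binom(z,k) = (∏_{j=0}^{k-1} (z-j)) / k!`, as a
rational number. -/
def qbinom (z : ℤ) (k : ℕ) : ℚ :=
  (∏ j ∈ Finset.range k, ((z : ℚ) - (j : ℚ))) / (Nat.factorial k : ℚ)

/-- `K^τ_{μ/d} = (-1)^{(|μ|/d)τ}·(τ(τ+1))^{l−1}·(∏_i binom((μ_i/d)(τ+1)−1, μ_i/d−1))·
(|μ|/d)^{l−3}`, the genus-0 open Gromov–Witten invariant at top a-degree. -/
noncomputable def Kres (τ : ℤ) {l : ℕ} (μp : Fin l → ℕ) (d : ℕ) : ℚ :=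
  (-1 : ℚ) ^ ((((∑ i, μp i) / d : ℕ) : ℤ) * τ) * ((τ * (τ + 1) : ℤ) : ℚ) ^ (l - 1) *
    (∏ i, qbinom (((μp i / d : ℕ) : ℤ) * (τ + 1) - 1) (μp i / d - 1)) *
    ((((∑ i, μp i) / d : ℕ) : ℚ)) ^ (l - 3)

lemma prod_eq_descPochhammer (z : ℤ) (k : ℕ) :
    (∏ j ∈ Finset.range k, ((z : ℚ) - (j : ℚ))) = (((descPochhammer ℤ k).eval z : ℤ) : ℚ) := by
  induction k with
  | zero => simp
  | succ n ih =>
    rw [Finset.prod_range_succ, ih, descPochhammer_succ_eval]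
    push_cast
    ring

lemma qbinom_int (z : ℤ) (k : ℕ) : ∃ m : ℤ, qbinom z k = (m : ℚ) := by
  refine ⟨Ring.choose z k, ?_⟩
  have h := Ring.descPochhammer_eq_factorial_smul_choose z k
  unfold qbinom
  rw [prod_eq_descPochhammer, Polynomial.eval_eq_smeval, h]
  have hf : (0 : ℚ) < (Nat.factorial k : ℚ) := by positivity
  field_simp
  simp [nsmul_eq_mul]

lemma neg_one_zpow_int (e : ℤ) : ∃ m : ℤ, (-1 : ℚ) ^ e = (m : ℚ) := by
  rcases Int.even_or_odd e with he | he
  · exact ⟨1, by rw [he.neg_one_zpow]; norm_num⟩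
  · exact ⟨-1, by rw [he.neg_one_zpow]; norm_num⟩

lemma Kres_mem (τ : ℤ) {l : ℕ} (μp : Fin l → ℕ) (d : ℕ) :
    Kres τ μp d ∈ (⊥ : Subring ℚ) := by
  unfold Kres
  refine mul_mem (mul_mem (mul_mem ?_ ?_) ?_) ?_
  · obtain ⟨m, hm⟩ := neg_one_zpow_int ((((∑ i, μp i) / d : ℕ) : ℤ) * τ)
    rw [hm]; exact Subring.mem_bot.2 ⟨m, rfl⟩
  · exact pow_mem (Subring.mem_bot.2 ⟨_, rfl⟩) _
  · refine prod_mem fun i _ => ?_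
    obtain ⟨m, hm⟩ := qbinom_int (((μp i / d : ℕ) : ℤ) * (τ + 1) - 1) (μp i / d - 1)
    rw [hm]; exact Subring.mem_bot.2 ⟨m, rfl⟩
  · exact pow_mem (Subring.mem_bot.2 ⟨((∑ i, μp i) / d : ℕ), Int.cast_natCast _⟩) _

/-- For a partition `μ` with `l(μ) ≥ 3` parts, each `K^τ_{μ/d}` is an integer and
`n_{μ,0,|μ|/2}(τ) = (-1)^l·Σ_{d | gcd(μ₁,…,μ_l)} μ(d)·d^{l−1}·K^τ_{μ/d}` is an integer. -/
theorem stmt3 (τ : ℤ) (l : ℕ) (hl : 3 ≤ l) (μp : Fin l → ℕ)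
    (hpos : ∀ i, 1 ≤ μp i) (hmono : ∀ i j : Fin l, i ≤ j → μp j ≤ μp i) :
    (∀ d ∈ ((Finset.univ : Finset (Fin l)).gcd μp).divisors, ∃ z : ℤ, Kres τ μp d = (z : ℚ)) ∧
    ∃ N : ℤ,
      (-1 : ℚ) ^ l *
        ∑ d ∈ ((Finset.univ : Finset (Fin l)).gcd μp).divisors,
          (ArithmeticFunction.moebius d : ℚ) * (d : ℚ) ^ (l - 1) * Kres τ μp d
      = (N : ℚ) := by
  constructor
  · intro d _
    obtain ⟨z, hz⟩ := Subring.mem_bot.1 (Kres_mem τ μp d)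
    exact ⟨z, hz.symm⟩
  · have hmem : (-1 : ℚ) ^ l *
        ∑ d ∈ ((Finset.univ : Finset (Fin l)).gcd μp).divisors,
          (ArithmeticFunction.moebius d : ℚ) * (d : ℚ) ^ (l - 1) * Kres τ μp d
        ∈ (⊥ : Subring ℚ) := by
      refine mul_mem (pow_mem (neg_mem (Subring.one_mem _)) _) ?_
      refine sum_mem fun d _ => ?_
      refine mul_mem (mul_mem ?_ ?_) (Kres_mem τ μp d)
      · exact Subring.mem_bot.2 ⟨(ArithmeticFunction.moebius d : ℤ), rfl⟩
      · exact pow_mem (Subring.mem_bot.2 ⟨(d : ℤ), by push_cast; rfl⟩) _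
    obtain ⟨N, hN⟩ := Subring.mem_bot.1 hmem
    exact ⟨N, hN.symm⟩
end

section
/- Let F be a field, let q ∈ F be nonzero, let H : ℕ → F be a sequence, let S ⊂ ℤ × ℕ be a finite set, and let c : S → F. Assume that for every n ≥ 0, Σ_{(i,j)∈S} c(i,j)·q^{n·i}·H(n+j) = 0. For each integer i, let Z_i denote the formal Laurent series Σ_{n≥0} H(n)·q^{n·i}·x^{n} ∈ F((x)). Then in F((x)) one has Σ_{(i,j)∈S} c(i,j)·q^{−ij}·x^{−j}·Z_i = Σ_{(i,j)∈S} c(i,j)·Σ_{k=1}^{j} H(j−k)·q^{−k·i}·x^{−k}. -/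
open Finset

section Aux
variable {F : Type*} [Field F]

lemma myCoeffSum {α} (s : Finset α) (f : α → LaurentSeries F) (g : ℤ) :
    (∑ a ∈ s, f a).coeff g = ∑ a ∈ s, (f a).coeff g :=
  map_sum (HahnSeries.coeff.addMonoidHom g) f s

lemma myOfPSneg (f : PowerSeries F) (m : ℤ) (hm : m < 0) :
    (HahnSeries.ofPowerSeries ℤ F f).coeff m = 0 := by
  rw [HahnSeries.ofPowerSeries_apply]
  refine HahnSeries.embDomain_notin_range ?_
  rintro ⟨n, hn⟩
  change ((n : ℕ) : ℤ) = m at hn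
  omega

lemma myZcoeff (f : ℕ → F) (m : ℤ) :
    (HahnSeries.ofPowerSeries ℤ F (PowerSeries.mk f)).coeff m
      = if 0 ≤ m then f m.toNat else 0 := by
  split_ifs with h
  · obtain ⟨n, rfl⟩ := Int.eq_ofNat_of_zero_le h
    rw [HahnSeries.ofPowerSeries_apply_coeff, PowerSeries.coeff_mk]
    simp
  · exact myOfPSneg _ _ (lt_of_not_ge h)

lemma mySingleMulCoeff (a : ℤ) (r : F) (x : LaurentSeries F) (g : ℤ) :
    (HahnSeries.single a r * x).coeff g = r * x.coeff (g - a) := by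
  conv_lhs => rw [show g = (g - a) + a from by ring]
  rw [HahnSeries.coeff_single_mul_add]

lemma myCXpow (a : F) (j : ℕ) :
    HahnSeries.C a * ((HahnSeries.ofPowerSeries ℤ F PowerSeries.X : LaurentSeries F) ^ (-(j : ℤ)))
      = HahnSeries.single (-(j:ℤ)) a := by
  rw [HahnSeries.ofPowerSeries_X, ← RatFunc.single_zpow, HahnSeries.C_apply,
    HahnSeries.single_mul_single, zero_add, mul_one]

end Aux

/-- If the noncommutative polynomial `Â(M,L) = Σ_{(i,j)∈S} c(i,j) M^i L^j` (acting by
`M·H_n = q^n H_n`, `L·H_n = H_{n+1}`) annihilates the sequence `H`, then applying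
`Â(ŷ, x̂⁻¹)` to the generating function `Z(x) = Σ_{n≥0} H(n) x^n` — i.e. forming
`Σ_{(i,j)∈S} c(i,j)·q^{−ij}·x^{−j}·Z_i` with `Z_i = Σ_{n≥0} H(n) q^{ni} x^n` — yields the
principal part `Σ_{(i,j)∈S} c(i,j)·Σ_{k=1}^{j} H(j−k)·q^{−ki}·x^{−k}` in `F((x))`. -/
theorem stmt6 (F : Type*) [Field F] (q : F) (hq : q ≠ 0) (H : ℕ → F)
    (S : Finset (ℤ × ℕ)) (c : ℤ × ℕ → F)
    (hrec : ∀ n : ℕ, ∑ p ∈ S, c p * q ^ ((n : ℤ) * p.1) * H (n + p.2) = 0) :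
    ∑ p ∈ S,
        HahnSeries.C (c p * q ^ (-(p.1 * (p.2 : ℤ)))) *
          ((HahnSeries.ofPowerSeries ℤ F PowerSeries.X : LaurentSeries F) ^ (-(p.2 : ℤ))) *
          (HahnSeries.ofPowerSeries ℤ F (PowerSeries.mk fun n => H n * q ^ ((n : ℤ) * p.1)))
      = ∑ p ∈ S,
          HahnSeries.C (c p) *
            ∑ k ∈ Finset.Icc 1 p.2,
              HahnSeries.C (H (p.2 - k) * q ^ (-(k : ℤ) * p.1)) *
                ((HahnSeries.ofPowerSeries ℤ F PowerSeries.X : LaurentSeries F) ^ (-(k : ℤ))) := by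
  ext g
  rw [myCoeffSum, myCoeffSum]
  have key : ∀ p : ℤ × ℕ,
      (HahnSeries.C (c p * q ^ (-(p.1 * (p.2 : ℤ)))) *
          ((HahnSeries.ofPowerSeries ℤ F PowerSeries.X : LaurentSeries F) ^ (-(p.2 : ℤ))) *
          (HahnSeries.ofPowerSeries ℤ F
            (PowerSeries.mk fun n => H n * q ^ ((n : ℤ) * p.1)))).coeff g
      = if 0 ≤ g + (p.2:ℤ) then
          c p * q ^ (-(p.1 * (p.2:ℤ))) *
            (H (g + (p.2:ℤ)).toNat * q ^ (((g + (p.2:ℤ)).toNat : ℤ) * p.1))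
        else 0 := by
    intro p
    rw [myCXpow, mySingleMulCoeff, myZcoeff, show g - (-(p.2:ℤ)) = g + p.2 from by ring,
      mul_ite, mul_zero]
  have key2 : ∀ p : ℤ × ℕ,
      (HahnSeries.C (c p) *
          ∑ k ∈ Finset.Icc 1 p.2,
            HahnSeries.C (H (p.2 - k) * q ^ (-(k : ℤ) * p.1)) *
              ((HahnSeries.ofPowerSeries ℤ F PowerSeries.X : LaurentSeries F) ^ (-(k : ℤ)))).coeff g
      = c p * ∑ k ∈ Finset.Icc 1 p.2,
          (if k = (-g).toNat ∧ g < 0 then H (p.2 - k) * q ^ (-(k:ℤ) * p.1) else 0) := by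
    intro p
    rw [show (HahnSeries.C (c p) : LaurentSeries F) = HahnSeries.single (0:ℤ) (c p) from rfl,
      mySingleMulCoeff, sub_zero, myCoeffSum]
    congr 1
    refine Finset.sum_congr rfl fun k hk => ?_
    rw [myCXpow, HahnSeries.coeff_single]
    have hk1 : 1 ≤ k := (Finset.mem_Icc.mp hk).1
    by_cases h : g = -(k:ℤ)
    · rw [if_pos h, if_pos (by constructor <;> omega)]
    · rw [if_neg h, if_neg]
      rintro ⟨h1, h2⟩
      omega
  simp only [key, key2]
  by_cases hg : 0 ≤ g
  · obtain ⟨n, rfl⟩ := Int.eq_ofNat_of_zero_le hg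
    have hR : ∀ p ∈ S, c p * ∑ k ∈ Finset.Icc 1 p.2,
        (if k = (-(n:ℤ)).toNat ∧ (n:ℤ) < 0 then H (p.2 - k) * q ^ (-(k:ℤ) * p.1) else 0) = 0 := by
      intro p _
      rw [Finset.sum_eq_zero, mul_zero]
      intro k _
      rw [if_neg]
      rintro ⟨-, h⟩
      omega
    rw [Finset.sum_congr rfl hR, Finset.sum_const_zero]
    calc ∑ p ∈ S, (if 0 ≤ (n:ℤ) + (p.2:ℤ) then
            c p * q ^ (-(p.1 * (p.2:ℤ))) *
              (H ((n:ℤ) + (p.2:ℤ)).toNat * q ^ ((((n:ℤ) + (p.2:ℤ)).toNat : ℤ) * p.1))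
          else 0)
        = ∑ p ∈ S, c p * q ^ ((n : ℤ) * p.1) * H (n + p.2) := by
          refine Finset.sum_congr rfl fun p _ => ?_
          rw [if_pos (by positivity)]
          have ht : ((n:ℤ) + (p.2:ℤ)).toNat = n + p.2 := by omega
          rw [ht]
          have hqe : q ^ (-(p.1 * (p.2:ℤ))) * q ^ (((n + p.2 : ℕ):ℤ) * p.1)
              = q ^ ((n:ℤ) * p.1) := by
            rw [← zpow_add₀ hq]; congr 1; push_cast; ring
          calc c p * q ^ (-(p.1 * (p.2:ℤ))) * (H (n+p.2) * q ^ (((n + p.2 : ℕ):ℤ) * p.1))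
              = c p * (q ^ (-(p.1 * (p.2:ℤ))) * q ^ (((n + p.2 : ℕ):ℤ) * p.1)) * H (n+p.2) := by
                ring
            _ = c p * q ^ ((n:ℤ) * p.1) * H (n + p.2) := by rw [hqe]
      _ = 0 := hrec n
  · push_neg at hg
    refine Finset.sum_congr rfl fun p _ => ?_
    have hsum : ∑ k ∈ Finset.Icc 1 p.2,
        (if k = (-g).toNat ∧ g < 0 then H (p.2 - k) * q ^ (-(k:ℤ) * p.1) else 0)
        = ∑ k ∈ Finset.Icc 1 p.2,
            (if k = (-g).toNat then H (p.2 - k) * q ^ (-(k:ℤ) * p.1) else 0) := by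
      refine Finset.sum_congr rfl fun k _ => ?_
      refine if_congr ?_ rfl rfl
      constructor
      · exact And.left
      · intro h; exact ⟨h, hg⟩
    rw [hsum, Finset.sum_ite_eq' (Finset.Icc 1 p.2) ((-g).toNat)
      (fun k => H (p.2 - k) * q ^ (-(k:ℤ) * p.1))]
    by_cases hj : 0 ≤ g + (p.2:ℤ)
    · have hmem : (-g).toNat ∈ Finset.Icc 1 p.2 := by
        rw [Finset.mem_Icc]; omega
      rw [if_pos hj, if_pos hmem]
      have hH : H ((g + (p.2:ℤ)).toNat) = H (p.2 - (-g).toNat) := by congr 1; omega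
      have e1 : (((g + (p.2:ℤ)).toNat):ℤ) = g + p.2 := by omega
      have e2 : (((-g).toNat:ℕ):ℤ) = -g := by omega
      have hqe : q ^ (-(p.1 * (p.2:ℤ))) * q ^ ((((g + (p.2:ℤ)).toNat):ℤ) * p.1)
          = q ^ (-(((-g).toNat:ℕ):ℤ) * p.1) := by
        rw [← zpow_add₀ hq]; congr 1; rw [e1, e2]; ring
      calc c p * q ^ (-(p.1 * (p.2:ℤ))) *
            (H ((g + (p.2:ℤ)).toNat) * q ^ ((((g + (p.2:ℤ)).toNat):ℤ) * p.1))
          = H ((g + (p.2:ℤ)).toNat) * c p *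
              (q ^ (-(p.1 * (p.2:ℤ))) * q ^ ((((g + (p.2:ℤ)).toNat):ℤ) * p.1)) := by ring
        _ = H (p.2 - (-g).toNat) * c p * q ^ (-(((-g).toNat:ℕ):ℤ) * p.1) := by rw [hqe, hH]
        _ = c p * (H (p.2 - (-g).toNat) * q ^ (-(((-g).toNat:ℕ):ℤ) * p.1)) := by ring
    · rw [if_neg hj, if_neg, mul_zero]
      rw [Finset.mem_Icc]
      omega
end

section
/- Let τ ∈ ℤ and let R = ℚ[a] be the polynomial ring in one variable a. There exists a unique formal power series Y ∈ R[[X]] with zero constant term satisfying Y = X·(1−Y)^{τ}·(1 − a(1−Y)), where (1−Y)^{τ} denotes the τ-th power of the unit 1−Y of R[[X]] (its inverse power when τ < 0). Moreover, for every n ≥ 1 the coefficient of X^{n} in Y equals −(1/n)·Σ_{i=0}^{n} (−1)^{n+i}·binom(n,i)·binom(nτ+i, n−1)·a^{i}. -/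
open Finset

/-- The coefficient ring `R = ℚ[a]`. -/
abbrev Rq : Type := Polynomial ℚ

open PowerSeries Finset

lemma qbinom_zero (z : ℤ) : qbinom z 0 = 1 := by simp [qbinom]

lemma qbinom_int_zero_succ (k : ℕ) : qbinom 0 (k + 1) = 0 := by
  simp [qbinom, Finset.prod_range_succ']

lemma qbinom_pascal (m : ℤ) (k : ℕ) :
    qbinom (m + 1) (k + 1) = qbinom m (k + 1) + qbinom m k := by
  have hk : (Nat.factorial (k+1) : ℚ) ≠ 0 := by exact_mod_cast (Nat.factorial_pos (k+1)).ne'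
  have hk' : (Nat.factorial k : ℚ) ≠ 0 := by exact_mod_cast (Nat.factorial_pos k).ne'
  have h1 : ∏ j ∈ range (k+1), (((m+1 : ℤ):ℚ) - j) = ((m:ℚ)+1) * ∏ j ∈ range k, ((m:ℚ) - j) := by
    rw [Finset.prod_range_succ']
    push_cast
    ring_nf
  have h2 : ∏ j ∈ range (k+1), ((m:ℚ) - j) = (∏ j ∈ range k, ((m:ℚ) - j)) * ((m:ℚ) - k) := by
    rw [Finset.prod_range_succ]
  have h3 : (Nat.factorial (k+1) : ℚ) = (k+1) * Nat.factorial k := by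
    push_cast [Nat.factorial_succ]; ring
  rw [qbinom, qbinom, qbinom, div_add_div _ _ hk hk', div_eq_div_iff hk (by positivity), h1, h2, h3]
  ring

lemma qbinom_nat (n k : ℕ) : qbinom (n : ℤ) k = (n.choose k : ℚ) := by
  by_cases h : k ≤ n
  · have hprod : ∏ j ∈ range k, (((n:ℤ):ℚ) - (j:ℚ)) = ((n.descFactorial k : ℕ) : ℚ) := by
      rw [Nat.descFactorial_eq_prod_range]
      push_cast [Nat.cast_prod]
      apply Finset.prod_congr rfl
      intro j hj
      have hj' : j ≤ n := le_trans (mem_range.mp hj).le h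
      rw [Nat.cast_sub hj']
    rw [qbinom, hprod, Nat.descFactorial_eq_factorial_mul_choose]
    push_cast
    rw [mul_comm]
    field_simp
  · push_neg at h
    rw [Nat.choose_eq_zero_of_lt h, qbinom]
    rw [Finset.prod_eq_zero (Finset.mem_range.mpr h) (by simp), Nat.cast_zero, zero_div]


noncomputable abbrev K : Type := RatFunc ℚ
abbrev PS : Type := PowerSeries K
noncomputable abbrev ccK : PS →+* K := PowerSeries.constantCoeff
noncomputable def aK : K := algebraMap Rq K Polynomial.X

instance : CharZero K := charZero_of_injective_algebraMap (algebraMap ℚ K).injective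

lemma mapRK_injective : Function.Injective (PowerSeries.map (algebraMap Rq K)) := by
  intro f g h
  apply PowerSeries.ext
  intro n
  apply IsFractionRing.injective Rq K
  rw [← PowerSeries.coeff_map, ← PowerSeries.coeff_map, h]

lemma mc_dvd_mul_sub_mul {n : ℕ} {A B C D : PS} (h1 : X^n ∣ A - B) (h2 : X^n ∣ C - D) :
    X^n ∣ A*C - B*D := by
  have e : A*C - B*D = A*(C-D) + (A-B)*D := by ring
  rw [e]
  exact dvd_add (h2.mul_left A) (h1.mul_right D)

lemma mc_dvd_pow_sub_pow {n : ℕ} {A B : PS} (h : X^n ∣ A - B) (k : ℕ) : X^n ∣ A^k - B^k := by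
  induction k with
  | zero => simp
  | succ k ih => rw [pow_succ, pow_succ]; exact mc_dvd_mul_sub_mul ih h

lemma mc_dvd_inv_sub_inv {n : ℕ} {A B : PS} (hA : ccK A ≠ 0) (hB : ccK B ≠ 0)
    (h : X^n ∣ A - B) : X^n ∣ A⁻¹ - B⁻¹ := by
  have hBB : B * B⁻¹ = 1 := PowerSeries.mul_inv_cancel B hB
  have hAA : A⁻¹ * A = 1 := PowerSeries.inv_mul_cancel A hA
  have e : A⁻¹ - B⁻¹ = A⁻¹ * (B - A) * B⁻¹ := by
    calc A⁻¹ - B⁻¹ = A⁻¹ * (B * B⁻¹) - (A⁻¹ * A) * B⁻¹ := by rw [hBB, hAA]; ring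
    _ = A⁻¹ * (B - A) * B⁻¹ := by ring
  rw [e]
  have h' : X^n ∣ B - A := by rw [show B - A = -(A - B) by ring]; exact h.neg_right
  exact (h'.mul_left A⁻¹).mul_right B⁻¹

noncomputable def Fm (τ : ℤ) (Z : PS) : PS :=
  X * ((1-Z)^(τ.toNat) * ((1-Z)^((-τ).toNat))⁻¹ * (1 - C aK * (1 - Z)))

lemma ccK_Fm (τ : ℤ) (Z : PS) : ccK (Fm τ Z) = 0 := by
  simp [Fm]

lemma Fm_contraction (τ : ℤ) {n : ℕ} {Z₁ Z₂ : PS} (h1 : ccK Z₁ = 0) (h2 : ccK Z₂ = 0)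
    (h : X^n ∣ Z₁ - Z₂) : X^(n+1) ∣ Fm τ Z₁ - Fm τ Z₂ := by
  have hsub : X^n ∣ (1 - Z₁) - (1 - Z₂) := by
    rw [show (1 - Z₁) - (1 - Z₂) = -(Z₁ - Z₂) by ring]; exact h.neg_right
  have hc1 : ccK ((1-Z₁)^((-τ).toNat)) ≠ 0 := by
    rw [map_pow, map_sub, map_one, h1, sub_zero, one_pow]; exact one_ne_zero
  have hc2 : ccK ((1-Z₂)^((-τ).toNat)) ≠ 0 := by
    rw [map_pow, map_sub, map_one, h2, sub_zero, one_pow]; exact one_ne_zero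
  have hP := mc_dvd_pow_sub_pow hsub (τ.toNat)
  have hQ := mc_dvd_inv_sub_inv hc1 hc2 (mc_dvd_pow_sub_pow hsub ((-τ).toNat))
  have hL : X^n ∣ (1 - C aK * (1 - Z₁)) - (1 - C aK * (1 - Z₂)) := by
    rw [show (1 - C aK * (1 - Z₁)) - (1 - C aK * (1 - Z₂))
        = C aK * (-((1-Z₁)-(1-Z₂))) by ring]
    exact (hsub.neg_right).mul_left _
  have hW := mc_dvd_mul_sub_mul (mc_dvd_mul_sub_mul hP hQ) hL
  have e : Fm τ Z₁ - Fm τ Z₂ = X * ((1-Z₁)^(τ.toNat) * ((1-Z₁)^((-τ).toNat))⁻¹ *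
      (1 - C aK * (1 - Z₁)) - (1-Z₂)^(τ.toNat) * ((1-Z₂)^((-τ).toNat))⁻¹ *
      (1 - C aK * (1 - Z₂))) := by
    rw [Fm, Fm]; ring
  rw [e, pow_succ, mul_comm (X^n) X]
  exact mul_dvd_mul_left X hW

lemma mc_eq_of_forall_dvd {A B : PS} (h : ∀ n : ℕ, X^n ∣ A - B) : A = B := by
  rw [← sub_eq_zero]
  ext n
  rw [map_zero]
  exact PowerSeries.X_pow_dvd_iff.mp (h (n+1)) n (Nat.lt_succ_self n)

lemma Fm_fixed_unique (τ : ℤ) {Y₁ Y₂ : PS} (h1 : ccK Y₁ = 0) (h2 : ccK Y₂ = 0)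
    (f1 : Fm τ Y₁ = Y₁) (f2 : Fm τ Y₂ = Y₂) : Y₁ = Y₂ := by
  apply mc_eq_of_forall_dvd
  intro n
  induction n with
  | zero => simp
  | succ n ih => rw [← f1, ← f2]; exact Fm_contraction τ h1 h2 ih

noncomputable def Sit (τ : ℤ) (m : ℕ) : PS := (Fm τ)^[m] 0

lemma Sit_succ (τ : ℤ) (m : ℕ) : Sit τ (m+1) = Fm τ (Sit τ m) := by
  rw [Sit, Sit, Function.iterate_succ_apply']

lemma Fm_exists_fixed (τ : ℤ) : ∃ Y : PS, ccK Y = 0 ∧ Fm τ Y = Y := by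
  have hScc : ∀ m, ccK (Sit τ m) = 0 := by
    intro m
    cases m with
    | zero => simp [Sit]
    | succ m => rw [Sit_succ]; exact ccK_Fm τ _
  have hstep : ∀ m, X^m ∣ Sit τ (m+1) - Sit τ m := by
    intro m
    induction m with
    | zero => simp
    | succ m ih =>
      rw [Sit_succ, Sit_succ]
      have c1 : ccK (Fm τ (Sit τ m)) = 0 := ccK_Fm τ _
      exact Fm_contraction τ (by rw [← Sit_succ]; exact hScc (m+1)) (hScc m)
        (by rw [← Sit_succ]; exact ih)
  have hstable : ∀ m k, X^m ∣ Sit τ (m+k) - Sit τ m := by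
    intro m k
    induction k with
    | zero => simp
    | succ k ih =>
      have h2 : X^m ∣ Sit τ (m+k+1) - Sit τ (m+k) :=
        (pow_dvd_pow X (Nat.le_add_right m k)).trans (hstep (m+k))
      have h3 := dvd_add h2 ih
      rw [sub_add_sub_cancel] at h3
      rw [show m + (k+1) = m + k + 1 from rfl]
      exact h3
  refine ⟨PowerSeries.mk (fun n => coeff n (Sit τ (n+1))), ?_, ?_⟩
  · have : ccK (PowerSeries.mk (fun n => coeff n (Sit τ (n+1))) : PS)
        = coeff 0 (Sit τ 1) := by
      rw [← PowerSeries.coeff_zero_eq_constantCoeff_apply, PowerSeries.coeff_mk]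
    rw [this, PowerSeries.coeff_zero_eq_constantCoeff_apply]
    exact hScc 1
  · set Y : PS := PowerSeries.mk (fun n => coeff n (Sit τ (n+1))) with hY
    have hYcc : ccK Y = 0 := by
      rw [hY, ← PowerSeries.coeff_zero_eq_constantCoeff_apply, PowerSeries.coeff_mk,
        PowerSeries.coeff_zero_eq_constantCoeff_apply]
      exact hScc 1
    have hYS : ∀ m, X^m ∣ Y - Sit τ m := by
      intro m
      rw [PowerSeries.X_pow_dvd_iff]
      intro j hj
      rw [map_sub, hY, PowerSeries.coeff_mk]
      have hm : m = (j+1) + (m - (j+1)) := by omega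
      rw [hm]
      have hc := PowerSeries.X_pow_dvd_iff.mp (hstable (j+1) (m - (j+1))) j (Nat.lt_succ_self j)
      rw [map_sub, sub_eq_zero] at hc
      rw [sub_eq_zero]
      exact hc.symm
    apply mc_eq_of_forall_dvd
    intro n
    have e : Fm τ Y - Y = (Fm τ Y - Fm τ (Sit τ n)) + (Sit τ (n+1) - Y) := by
      rw [Sit_succ]; ring
    rw [e]
    refine dvd_add ?_ ?_
    · exact (pow_dvd_pow X (Nat.le_succ n)).trans
        (Fm_contraction τ hYcc (hScc n) (hYS n))
    · have := (hYS (n+1)).neg_right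
      rw [neg_sub] at this
      exact (pow_dvd_pow X (Nat.le_succ n)).trans this

section D
open PowerSeries Finset

lemma ccK_ne_zero_of_unit (v : PSˣ) : ccK (v : PS) ≠ 0 := by
  intro h
  have h1 : ccK ((v : PS) * ((v⁻¹ : PSˣ) : PS)) = 1 := by
    rw [← Units.val_mul, mul_inv_cancel, Units.val_one, map_one]
  rw [map_mul, h, zero_mul] at h1
  exact zero_ne_one h1

lemma val_ne_zero_of_unit (v : PSˣ) : (v : PS) ≠ 0 := by
  intro h
  exact ccK_ne_zero_of_unit v (by rw [h, map_zero])

lemma coe_unit_inv (v : PSˣ) : ((v⁻¹ : PSˣ) : PS) = (v : PS)⁻¹ := by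
  have h1 : (v : PS) * ((v⁻¹ : PSˣ) : PS) = 1 := by
    rw [← Units.val_mul, mul_inv_cancel, Units.val_one]
  have h2 : (v : PS) * (v : PS)⁻¹ = 1 := PowerSeries.mul_inv_cancel _ (ccK_ne_zero_of_unit v)
  exact mul_left_cancel₀ (val_ne_zero_of_unit v) (h1.trans h2.symm)

lemma unit_zpow_eq {Z : PS} (u : PSˣ) (h : (u:PS) = 1 - Z) (τ : ℤ) :
    ((u^τ : PSˣ) : PS) = (1-Z)^(τ.toNat) * ((1-Z)^((-τ).toNat))⁻¹ := by
  rcases le_or_gt 0 τ with hτ | hτ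
  · obtain ⟨t, rfl⟩ : ∃ t:ℕ, τ = (t:ℤ) := ⟨τ.toNat, (Int.toNat_of_nonneg hτ).symm⟩
    have h1 : ((t:ℤ)).toNat = t := Int.toNat_natCast t
    have h2 : (-(t:ℤ)).toNat = 0 := Int.toNat_of_nonpos (by omega)
    have hinv : ((1:PS))⁻¹ = 1 := by
      have := PowerSeries.mul_inv_cancel (1:PS) (by rw [map_one]; exact one_ne_zero)
      rwa [one_mul] at this
    rw [h1, h2, pow_zero, hinv, mul_one, zpow_natCast, Units.val_pow_eq_pow_val, h]
  · obtain ⟨t, ht⟩ : ∃ t:ℕ, τ = -(t:ℤ) := ⟨(-τ).toNat, by omega⟩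
    have h1 : τ.toNat = 0 := Int.toNat_of_nonpos (by omega)
    have h2 : (-τ).toNat = t := by omega
    rw [h1, h2, pow_zero, one_mul, ht, zpow_neg, zpow_natCast, ← inv_pow,
      Units.val_pow_eq_pow_val, coe_unit_inv, h]
    have hcc : ccK ((1-Z)^t) ≠ 0 := by
      rw [map_pow]
      exact pow_ne_zero _ (by rw [← h]; exact ccK_ne_zero_of_unit u)
    symm
    rw [PowerSeries.inv_eq_iff_mul_eq_one hcc, ← mul_pow,
      PowerSeries.inv_mul_cancel _ (by rw [← h]; exact ccK_ne_zero_of_unit u), one_pow]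
end D

section E
open PowerSeries Finset

noncomputable def qC (q : ℚ) : K := algebraMap ℚ K q

lemma qC_mul (a b : ℚ) : qC a * qC b = qC (a*b) := by rw [qC, qC, qC, map_mul]
lemma qC_neg (a : ℚ) : -qC a = qC (-a) := by rw [qC, qC, map_neg]

noncomputable def Atr (w : PS) (n : ℕ) (m : ℤ) : PS :=
  ∑ k ∈ range n, C (qC ((-1)^k * qbinom m k)) * w^k

lemma Atr_pascal (w : PS) (n : ℕ) (m : ℤ) :
    Atr w (n+1) (m+1) = Atr w (n+1) m - w * Atr w n m := by
  rw [eq_sub_iff_add_eq]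
  have key : ∀ k : ℕ, C (qC ((-1)^(k+1) * qbinom (m+1) (k+1))) * w^(k+1)
      + w * (C (qC ((-1)^k * qbinom m k)) * w^k)
      = C (qC ((-1)^(k+1) * qbinom m (k+1))) * w^(k+1) := by
    intro k
    rw [qbinom_pascal]
    have e : ((-1:ℚ))^(k+1) * (qbinom m (k+1) + qbinom m k)
        = (-1)^(k+1) * qbinom m (k+1) + (-1) * ((-1)^k * qbinom m k) := by ring
    rw [e]
    simp only [qC, map_add, map_mul, map_neg, map_one, pow_succ]
    ring
  rw [Atr, Atr, Atr, Finset.sum_range_succ' _ n,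
    Finset.sum_range_succ' (fun k => C (qC ((-1)^k * qbinom m k)) * w^k) n,
    Finset.mul_sum, add_right_comm, ← Finset.sum_add_distrib,
    Finset.sum_congr rfl (fun k _ => key k), qbinom_zero, qbinom_zero]

lemma trunc_zpow {w : PS} (u : PSˣ) (hu : (u:PS) = 1 - w) (hw : X ∣ w) :
    ∀ (n:ℕ) (m:ℤ), X^n ∣ ((u^m : PSˣ) : PS) - Atr w n m := by
  intro n
  induction n with
  | zero => intro m; simpa using one_dvd _
  | succ n ihn =>
    intro m
    induction m using Int.induction_on with
    | zero =>
      have hA : Atr w (n+1) 0 = 1 := by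
        rw [Atr, Finset.sum_range_succ' _ n]
        have hzero : ∀ k ∈ range n,
            C (qC ((-1)^(k+1) * qbinom 0 (k+1))) * w^(k+1) = 0 := by
          intro k _
          rw [qbinom_int_zero_succ, mul_zero]
          simp [qC]
        rw [Finset.sum_eq_zero hzero, zero_add, qbinom_zero, pow_zero, mul_one]
        simp [qC]
      rw [hA, zpow_zero, Units.val_one, sub_self]
      exact dvd_zero _
    | succ i ih =>
      have e : ((u^((i:ℤ)+1) : PSˣ) : PS) - Atr w (n+1) ((i:ℤ)+1)
          = (((u^(i:ℤ) : PSˣ) : PS) - Atr w (n+1) (i:ℤ))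
            - w * (((u^(i:ℤ) : PSˣ) : PS) - Atr w n (i:ℤ)) := by
        rw [zpow_add_one, Units.val_mul, hu, Atr_pascal]
        ring
      rw [e]
      refine dvd_sub ih ?_
      rw [pow_succ, mul_comm (X^n) X]
      exact mul_dvd_mul hw (ihn (i:ℤ))
    | pred i ih =>
      have hm : (-(i:ℤ) - 1) + 1 = -(i:ℤ) := by ring
      have em : ((u^(-(i:ℤ)) : PSˣ) : PS)
          = ((u^(-(i:ℤ)-1) : PSˣ) : PS) * (1 - w) := by
        rw [← hu, ← Units.val_mul, ← zpow_add_one, hm]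
      have eA : Atr w (n+1) (-(i:ℤ)) = Atr w (n+1) (-(i:ℤ)-1) - w * Atr w n (-(i:ℤ)-1) := by
        have := Atr_pascal w n (-(i:ℤ)-1)
        rwa [hm] at this
      have e : ((u^(-(i:ℤ)-1) : PSˣ) : PS) - Atr w (n+1) (-(i:ℤ)-1)
          = (((u^(-(i:ℤ)) : PSˣ) : PS) - Atr w (n+1) (-(i:ℤ)))
            + w * (((u^(-(i:ℤ)-1) : PSˣ) : PS) - Atr w n (-(i:ℤ)-1)) := by
        rw [em, eA]
        ring
      rw [e]
      refine dvd_add ih ?_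
      rw [pow_succ, mul_comm (X^n) X]
      exact mul_dvd_mul hw (ihn _)
end E

section F
open PowerSeries Finset

noncomputable abbrev DX : PS → PS := fun f => PowerSeries.derivative K f

lemma residue (g : PSˣ) (s : ℕ) :
    coeff s ((((g⁻¹:PSˣ):PS))^(s+1) * DX (X * (g:PS)))
      = if s = 0 then 1 else 0 := by
  set H : PS := ((g⁻¹:PSˣ):PS) with hH
  set G : PS := (g:PS) with hG
  have hHG : H * G = 1 := by rw [hH, hG, ← Units.val_mul, inv_mul_cancel, Units.val_one]
  have hd : DX (X * G) = X * DX G + G := by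
    show (PowerSeries.derivative K) (X * G) = X * (PowerSeries.derivative K G) + G
    rw [Derivation.leibniz, smul_eq_mul, smul_eq_mul, PowerSeries.derivative_X, mul_one]
  have hpow : H^(s+1) * G = H^s := by rw [pow_succ, mul_assoc, hHG, mul_one]
  have e : H^(s+1) * DX (X * G) = X * (H^(s+1) * DX G) + H^s := by
    rw [hd, mul_add, hpow, ← mul_assoc, mul_comm (H^(s+1)) X, mul_assoc]
  rw [e, map_add]
  cases s with
  | zero =>
    rw [if_pos rfl]
    have h1 : coeff 0 (X * (H^(0+1) * DX G)) = 0 := by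
      rw [PowerSeries.coeff_zero_eq_constantCoeff, map_mul, PowerSeries.constantCoeff_X, zero_mul]
    rw [h1, zero_add, pow_zero]
    simp
  | succ t =>
    rw [if_neg (Nat.succ_ne_zero t), PowerSeries.coeff_succ_X_mul]
    have hdH : DX H = -H^2 * DX G := by
      show (PowerSeries.derivative K) ((g⁻¹:PSˣ):PS) = _
      rw [PowerSeries.derivative_inv]
    have hdpow : DX (H^(t+1)) = ((t+1):ℕ) • (-(H^(t+1+1) * DX G)) := by
      show (PowerSeries.derivative K) (H^(t+1)) = _
      rw [Derivation.leibniz_pow, Nat.add_sub_cancel, smul_eq_mul]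
      show ((t+1):ℕ) • (H^t * (PowerSeries.derivative K) H) = _
      rw [show (PowerSeries.derivative K) H = DX H from rfl, hdH]
      congr 1
      ring
    have h1 : coeff t (DX (H^(t+1))) = coeff (t+1) (H^(t+1)) * (((t+1):ℕ):K) := by
      show coeff t ((PowerSeries.derivative K) (H^(t+1))) = _
      rw [PowerSeries.coeff_derivative]
      norm_cast
    have h2 : coeff t (DX (H^(t+1))) = (((t+1):ℕ):K) * (- coeff t (H^(t+1+1) * DX G)) := by
      rw [hdpow, map_nsmul, nsmul_eq_mul, map_neg]
    have hne : (((t+1):ℕ):K) ≠ 0 := Nat.cast_ne_zero.mpr (Nat.succ_ne_zero t)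
    have h3 : coeff (t+1) (H^(t+1)) = - coeff t (H^(t+1+1) * DX G) := by
      have h4 := h1.symm.trans h2
      rw [mul_comm (((t+1):ℕ):K)] at h4
      exact mul_right_cancel₀ hne h4
    rw [h3]
    ring
end F

section G
open PowerSeries Finset

lemma one_sub_aK_ne : (1:K) - aK ≠ 0 := by
  rw [aK, show (1:K) = algebraMap Rq K 1 from (map_one _).symm, ← map_sub]
  intro h
  have h2 : (1 - Polynomial.X : Rq) = 0 := by
    apply IsFractionRing.injective Rq K
    rw [h, map_zero]
  have h3 := congrArg (Polynomial.eval 0) h2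
  simp at h3

lemma nK_ne (n : ℕ) (hn : 1 ≤ n) : ((n:ℕ):K) ≠ 0 :=
  Nat.cast_ne_zero.mpr (by omega)

lemma lagrange (τ : ℤ) {Y : PS} (hcc : ccK Y = 0) (u : PSˣ) (hu : (u:PS) = 1 - Y)
    (he : Y = X * ((u^τ : PSˣ) : PS) * (1 - C aK * (1-Y))) (n : ℕ) (hn : 1 ≤ n) :
    coeff n Y = qC (-(1/(n:ℚ))) * ∑ i ∈ range (n+1),
      qC ((-1)^(n+i) * qbinom (n:ℤ) i * qbinom ((n:ℤ)*τ + (i:ℤ)) (n-1)) * aK^i := by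
  set G : PS := ((u^τ:PSˣ):PS) * (1 - C aK * (1-Y)) with hGdef
  have hYG : Y = X * G := by rw [he, mul_assoc]
  have hGu : IsUnit G := by
    refine IsUnit.mul (u^τ).isUnit ?_
    rw [PowerSeries.isUnit_iff_constantCoeff]
    have hc : PowerSeries.constantCoeff (1 - C aK * (1-Y)) = 1 - aK := by
      simp [hcc]
    rw [hc]
    exact isUnit_iff_ne_zero.mpr one_sub_aK_ne
  obtain ⟨g, hg⟩ := hGu
  have hXdvdY : X ∣ Y := ⟨G, hYG⟩
  have hterm : ∀ i : ℕ,
      ((u^τ:PSˣ):PS)^n * ((-(C aK * (u:PS)))^i * (1:PS)^(n-i) * ((n.choose i : ℕ) : PS))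
      = C ((n.choose i : K) * (-aK)^i) * ((u^((n:ℤ)*τ + (i:ℤ)) : PSˣ) : PS) := by
    intro i
    have h1 : ((u^τ:PSˣ):PS)^n = (((u^τ)^n :PSˣ):PS) := (Units.val_pow_eq_pow_val _ _).symm
    have h2 : (u^τ)^n = u^((n:ℤ)*τ) := by
      rw [← zpow_natCast (u^τ) n, ← zpow_mul, mul_comm]
    have e2 : (-(C aK * (u:PS))) = C (-aK) * (u:PS) := by rw [map_neg]; ring
    have h3 : (-(C aK * (u:PS)))^i = C ((-aK)^i) * ((u^(i:ℤ) : PSˣ):PS) := by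
      rw [e2, mul_pow, ← map_pow, zpow_natCast, Units.val_pow_eq_pow_val]
    have h4 : ((n.choose i : ℕ) : PS) = C ((n.choose i : ℕ) : K) :=
      (map_natCast (C (R := K)) _).symm
    have h5 : ((u^((n:ℤ)*τ):PSˣ):PS) * ((u^(i:ℤ):PSˣ):PS) = ((u^((n:ℤ)*τ+(i:ℤ)):PSˣ):PS) := by
      rw [← Units.val_mul, ← zpow_add]
    rw [h1, h2, h3, one_pow, h4, ← h5, map_mul]
    ring
  have hGn : G^n = ∑ i ∈ range (n+1),
      C ((n.choose i : K) * (-aK)^i) * ((u^((n:ℤ)*τ+(i:ℤ)):PSˣ):PS) := by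
    have e0 : G = ((u^τ:PSˣ):PS) * (1 - C aK * (u:PS)) := by rw [hGdef, hu]
    have e1 : (1 - C aK * (u:PS)) = (-(C aK * (u:PS)) + 1) := by ring
    rw [e0, mul_pow, e1, add_pow, Finset.mul_sum]
    exact Finset.sum_congr rfl (fun i _ => hterm i)
  -- truncation
  set ci : ℕ → K := fun k => ∑ i ∈ range (n+1),
      (n.choose i : K) * (-aK)^i * qC ((-1)^k * qbinom ((n:ℤ)*τ+(i:ℤ)) k) with hci
  have hdvd : X^n ∣ G^n - ∑ k ∈ range n, C (ci k) * Y^k := by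
    have hswap : ∑ i ∈ range (n+1), C ((n.choose i:K)*(-aK)^i) * Atr Y n ((n:ℤ)*τ+(i:ℤ))
        = ∑ k ∈ range n, C (ci k) * Y^k := by
      simp only [Atr, Finset.mul_sum]
      rw [Finset.sum_comm]
      apply Finset.sum_congr rfl
      intro k _
      rw [hci]
      rw [map_sum, Finset.sum_mul]
      apply Finset.sum_congr rfl
      intro i _
      rw [← mul_assoc, ← map_mul]
    rw [← hswap, hGn, ← Finset.sum_sub_distrib]
    apply Finset.dvd_sum
    intro i _
    rw [← mul_sub]
    exact (trunc_zpow u hu hXdvdY n _).mul_left _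
  obtain ⟨σ, hσ⟩ := hdvd
  have hGnsum : G^n = ∑ k ∈ range n, C (ci k) * Y^k + X^n * σ := by
    rw [← hσ]; ring
  -- main identity
  set H : PS := ((g⁻¹:PSˣ):PS) with hHdef
  have hHGone : H * G = 1 := by rw [hHdef, ← hg, ← Units.val_mul, inv_mul_cancel, Units.val_one]
  have hHG1 : H^n * G^n = 1 := by rw [← mul_pow, hHGone, one_pow]
  have hcancel : ∀ k, k < n → H^n * Y^k = X^k * H^(n-k) := by
    intro k hk
    have hYk : Y^k = X^k * G^k := by rw [hYG, mul_pow]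
    have hHsplit : H^n = H^(n-k) * H^k := by rw [← pow_add]; congr 1; omega
    calc H^n * Y^k = H^(n-k) * ((H^k * G^k) * X^k) := by rw [hYk, hHsplit]; ring
    _ = X^k * H^(n-k) := by rw [← mul_pow, hHGone, one_pow, one_mul]; ring
  have hmain : DX Y = ∑ k ∈ range n, C (ci k) * (X^k * (H^(n-k) * DX Y))
      + X^n * (H^n * σ * DX Y) := by
    calc DX Y = (H^n * G^n) * DX Y := by rw [hHG1, one_mul]
    _ = (H^n * (∑ k ∈ range n, C (ci k) * Y^k) + X^n * (H^n * σ)) * DX Y := by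
        rw [hGnsum]; ring
    _ = (∑ k ∈ range n, C (ci k) * (H^n * Y^k)) * DX Y + X^n * (H^n * σ * DX Y) := by
        rw [Finset.mul_sum]
        have : ∀ k ∈ range n, H^n * (C (ci k) * Y^k) = C (ci k) * (H^n * Y^k) := by
          intro k _; ring
        rw [Finset.sum_congr rfl this]
        ring
    _ = _ := by
        rw [Finset.sum_mul]
        congr 1
        apply Finset.sum_congr rfl
        intro k hk
        rw [hcancel k (mem_range.mp hk)]
        ring
  -- take coefficient n-1
  have hcoeff : coeff (n-1) (DX Y) = ci (n-1) := by
    rw [hmain, map_add, map_sum]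
    have hlast : coeff (n-1) (X^n * (H^n * σ * DX Y)) = 0 := by
      refine PowerSeries.X_pow_dvd_iff.mp ⟨_, rfl⟩ (n-1) (by omega)
    have hterm3 : ∀ k ∈ range n, coeff (n-1) (C (ci k) * (X^k * (H^(n-k) * DX Y)))
        = if k = n-1 then ci (n-1) else 0 := by
      intro k hk
      have hk' : k < n := mem_range.mp hk
      rw [PowerSeries.coeff_C_mul, PowerSeries.coeff_X_pow_mul', if_pos (by omega : k ≤ n-1)]
      have hr : n - k = (n-1-k) + 1 := by omega
      have hres : coeff (n-1-k) (H^(n-k) * DX Y) = if (n-1-k) = 0 then 1 else 0 := by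
        rw [hr, hYG, ← hg]
        exact residue g (n-1-k)
      rw [hres]
      by_cases hkn : k = n-1
      · rw [if_pos (by omega), if_pos hkn, mul_one, hkn]
      · rw [if_neg (by omega), if_neg hkn, mul_zero]
    rw [Finset.sum_congr rfl hterm3, Finset.sum_ite_eq' (range n) (n-1) (fun _ => ci (n-1)),
      if_pos (mem_range.mpr (by omega)), hlast, add_zero]
  have hder : coeff (n-1) (DX Y) = coeff n Y * ((n:ℕ):K) := by
    show coeff (n-1) ((PowerSeries.derivative K) Y) = _
    rw [PowerSeries.coeff_derivative, show (n-1)+1 = n by omega, Nat.cast_sub hn, Nat.cast_one]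
    ring
  -- final algebra
  have hkey : coeff n Y * ((n:ℕ):K) = ci (n-1) := hder.symm.trans hcoeff
  have hsum : ci (n-1) = -(∑ i ∈ range (n+1),
      qC ((-1)^(n+i) * qbinom (n:ℤ) i * qbinom ((n:ℤ)*τ + (i:ℤ)) (n-1)) * aK^i) := by
    rw [hci, ← Finset.sum_neg_distrib]
    apply Finset.sum_congr rfl
    intro i _
    have hch : ((n.choose i : ℕ) : K) = qC (qbinom (n:ℤ) i) := by
      rw [qbinom_nat, qC, map_natCast]
    have hneg : (-aK)^i = qC ((-1)^i) * aK^i := by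
      rw [neg_pow, qC, map_pow, map_neg, map_one]
    have hsign : ((-1:ℚ))^i * (-1)^(n-1) = -(-1:ℚ)^(n+i) := by
      have e : (n+i) = (n-1+i)+1 := by omega
      rw [e, pow_succ, pow_add]
      ring
    rw [hch, hneg]
    rw [show qC (qbinom (n:ℤ) i) * (qC ((-1)^i) * aK^i) * qC ((-1)^(n-1) * qbinom ((n:ℤ)*τ+(i:ℤ)) (n-1))
      = (qC (qbinom (n:ℤ) i) * qC ((-1)^i) * qC ((-1)^(n-1) * qbinom ((n:ℤ)*τ+(i:ℤ)) (n-1))) * aK^i from by ring,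
      ← neg_mul]
    congr 1
    rw [qC_mul, qC_mul, qC_neg]
    congr 1
    linear_combination (qbinom (n:ℤ) i * qbinom ((n:ℤ)*τ+(i:ℤ)) (n-1)) * hsign
  have hne : ((n:ℕ):K) ≠ 0 := nK_ne n hn
  apply mul_right_cancel₀ hne
  rw [hkey, hsum]
  have hqCn : qC ((n:ℚ)) = ((n:ℕ):K) := by rw [qC, map_natCast]
  rw [← hqCn]
  have hq1 : qC (-(1/(n:ℚ))) * qC ((n:ℚ)) = -1 := by
    rw [qC_mul]
    have hnq : (-(1/(n:ℚ))) * (n:ℚ) = -1 := by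
      have : (n:ℚ) ≠ 0 := Nat.cast_ne_zero.mpr (by omega)
      field_simp
    rw [hnq, qC, map_neg, map_one]
  rw [show qC (-(1/(n:ℚ))) * (∑ i ∈ range (n+1),
      qC ((-1)^(n+i) * qbinom (n:ℤ) i * qbinom ((n:ℤ)*τ + (i:ℤ)) (n-1)) * aK^i) * qC ((n:ℚ))
      = (qC (-(1/(n:ℚ))) * qC ((n:ℚ))) * (∑ i ∈ range (n+1),
      qC ((-1)^(n+i) * qbinom (n:ℤ) i * qbinom ((n:ℤ)*τ + (i:ℤ)) (n-1)) * aK^i) from by ring, hq1]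
  ring
end G

section H
open PowerSeries Finset

/-- `Y ∈ R[[X]]` has zero constant term and satisfies the mirror curve equation
`Y = X·(1−Y)^τ·(1 − a(1−Y))`, where `(1−Y)^τ` is the `τ`-th power of the unit `1−Y`. -/
def MirrorEq (τ : ℤ) (Y : PowerSeries Rq) : Prop :=
  PowerSeries.constantCoeff Y = 0 ∧
    ∀ u : (PowerSeries Rq)ˣ, (u : PowerSeries Rq) = 1 - Y →
      Y = PowerSeries.X * ((u ^ τ : (PowerSeries Rq)ˣ) : PowerSeries Rq) *
        (1 - PowerSeries.C Polynomial.X * (1 - Y))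

noncomputable abbrev MK : PowerSeries Rq →+* PS := PowerSeries.map (algebraMap Rq K)

noncomputable def rhsPoly (τ : ℤ) (n : ℕ) : Rq :=
  Polynomial.C (-(1 / (n : ℚ))) *
    ∑ i ∈ Finset.range (n + 1),
      Polynomial.C ((-1 : ℚ) ^ (n + i) * qbinom (n : ℤ) i *
          qbinom ((n : ℤ) * τ + (i : ℤ)) (n - 1)) *
        Polynomial.X ^ i

noncomputable def Ysol (τ : ℤ) : PowerSeries Rq :=
  PowerSeries.mk (fun n => if n = 0 then 0 else rhsPoly τ n)

lemma algC (q : ℚ) : algebraMap Rq K (Polynomial.C q) = qC q := by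
  rw [qC, ← Polynomial.algebraMap_eq, ← IsScalarTower.algebraMap_apply]

lemma map_rhs (τ : ℤ) (n : ℕ) : algebraMap Rq K (rhsPoly τ n)
    = qC (-(1/(n:ℚ))) * ∑ i ∈ range (n+1),
      qC ((-1)^(n+i) * qbinom (n:ℤ) i * qbinom ((n:ℤ)*τ + (i:ℤ)) (n-1)) * aK^i := by
  rw [rhsPoly, map_mul, map_sum, algC]
  congr 1
  apply Finset.sum_congr rfl
  intro i _
  rw [map_mul, map_pow, algC, aK]

-- mapping a MirrorEq solution to a fixed point of Fm
lemma mirror_to_fixed {τ : ℤ} {Y : PowerSeries Rq} (h : MirrorEq τ Y) :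
    ccK (MK Y) = 0 ∧ Fm τ (MK Y) = MK Y ∧
    ∃ uK : PSˣ, (uK : PS) = 1 - MK Y ∧
      MK Y = X * ((uK^τ : PSˣ) : PS) * (1 - C aK * (1 - MK Y)) := by
  have hcc : ccK (MK Y) = 0 := by
    rw [show ccK (MK Y) = coeff 0 (MK Y) from (PowerSeries.coeff_zero_eq_constantCoeff_apply (MK Y)).symm,
      PowerSeries.coeff_map, PowerSeries.coeff_zero_eq_constantCoeff_apply, h.1, map_zero]
  have hU : IsUnit (1 - Y : PowerSeries Rq) := by
    rw [PowerSeries.isUnit_iff_constantCoeff]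
    rw [map_sub, map_one, h.1, sub_zero]
    exact isUnit_one
  obtain ⟨u, hu⟩ := hU
  have heq := h.2 u hu
  set uK : PSˣ := Units.map (MK.toMonoidHom) u with huK
  have huKval : (uK : PS) = 1 - MK Y := by
    rw [huK, Units.coe_map]
    show MK (u : PowerSeries Rq) = 1 - MK Y
    rw [hu, map_sub, map_one]
  have hzp : MK ((u^τ : (PowerSeries Rq)ˣ) : PowerSeries Rq) = ((uK^τ : PSˣ) : PS) := by
    rw [huK, ← map_zpow (Units.map MK.toMonoidHom) u τ, Units.coe_map]
    rfl
  have heqK : MK Y = X * ((uK^τ : PSˣ) : PS) * (1 - C aK * (1 - MK Y)) := by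
    conv_lhs => rw [heq]
    rw [map_mul, map_mul, map_sub, map_one, map_mul, map_sub, map_one,
      PowerSeries.map_X, PowerSeries.map_C, hzp]
    rfl
  refine ⟨hcc, ?_, uK, huKval, heqK⟩
  rw [Fm, ← unit_zpow_eq uK huKval τ, ← mul_assoc, ← heqK]
end H

section I
open PowerSeries Finset

lemma Y0_spec (τ : ℤ) : ∃ Y0 : PS, ccK Y0 = 0 ∧ Fm τ Y0 = Y0 ∧
    (∀ n : ℕ, 1 ≤ n → coeff n Y0 = algebraMap Rq K (rhsPoly τ n)) := by
  obtain ⟨Y0, hcc, hfix⟩ := Fm_exists_fixed τ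
  have hU : IsUnit ((1:PS) - Y0) := by
    rw [PowerSeries.isUnit_iff_constantCoeff, map_sub, map_one]
    rw [show PowerSeries.constantCoeff Y0 = ccK Y0 from rfl, hcc, sub_zero]
    exact isUnit_one
  obtain ⟨u0, hu0⟩ := hU
  have he : Y0 = X * ((u0^τ : PSˣ):PS) * (1 - C aK * (1-Y0)) := by
    conv_lhs => rw [← hfix]
    rw [Fm, ← unit_zpow_eq u0 hu0 τ, mul_assoc]
  refine ⟨Y0, hcc, hfix, ?_⟩
  intro n hn
  rw [map_rhs]
  exact lagrange τ hcc u0 hu0 he n hn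

lemma MK_Ysol (τ : ℤ) {Y0 : PS} (hcc : ccK Y0 = 0)
    (hco : ∀ n : ℕ, 1 ≤ n → coeff n Y0 = algebraMap Rq K (rhsPoly τ n)) :
    MK (Ysol τ) = Y0 := by
  apply PowerSeries.ext
  intro n
  rw [PowerSeries.coeff_map, Ysol, PowerSeries.coeff_mk]
  cases n with
  | zero =>
    rw [if_pos rfl, map_zero, PowerSeries.coeff_zero_eq_constantCoeff_apply]
    exact hcc.symm
  | succ n =>
    rw [if_neg (Nat.succ_ne_zero n)]
    exact (hco (n+1) (Nat.succ_le_succ (Nat.zero_le n))).symm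

/-- There is a unique power series `Y` with zero constant term solving the mirror curve
equation `Y = X(1−Y)^τ(1−a(1−Y))`, and its coefficient of `X^n` (for `n ≥ 1`) equals
`−(1/n)·Σ_{i=0}^{n} (−1)^{n+i}·binom(n,i)·binom(nτ+i, n−1)·a^i`. -/
theorem stmt7 (τ : ℤ) :
    (∃! Y : PowerSeries Rq, MirrorEq τ Y) ∧
    ∀ Y : PowerSeries Rq, MirrorEq τ Y → ∀ n : ℕ, 1 ≤ n →
      PowerSeries.coeff n Y =
        Polynomial.C (-(1 / (n : ℚ))) *
          ∑ i ∈ Finset.range (n + 1),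
            Polynomial.C ((-1 : ℚ) ^ (n + i) * qbinom (n : ℤ) i *
                qbinom ((n : ℤ) * τ + (i : ℤ)) (n - 1)) *
              Polynomial.X ^ i := by
  obtain ⟨Y0, hcc0, hfix0, hco0⟩ := Y0_spec τ
  have hMY : MK (Ysol τ) = Y0 := MK_Ysol τ hcc0 hco0
  have hYsolcc : PowerSeries.constantCoeff (Ysol τ) = 0 := by
    rw [← PowerSeries.coeff_zero_eq_constantCoeff_apply, Ysol, PowerSeries.coeff_mk, if_pos rfl]
  have hsol : MirrorEq τ (Ysol τ) := by
    refine ⟨hYsolcc, ?_⟩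
    intro u hu
    apply mapRK_injective
    show MK _ = MK _
    rw [map_mul, map_mul, map_sub, map_one, map_mul, map_sub, map_one,
      PowerSeries.map_X, PowerSeries.map_C]
    set uK : PSˣ := Units.map (MK.toMonoidHom) u with huK
    have huKval : (uK : PS) = 1 - MK (Ysol τ) := by
      rw [huK, Units.coe_map]
      show MK (u : PowerSeries Rq) = _
      rw [hu, map_sub, map_one]
    have hzp : MK ((u^τ : (PowerSeries Rq)ˣ) : PowerSeries Rq) = ((uK^τ : PSˣ) : PS) := by
      rw [huK, ← map_zpow (Units.map MK.toMonoidHom) u τ, Units.coe_map]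
      rfl
    rw [hzp, hMY]
    rw [hMY] at huKval
    conv_lhs => rw [← hfix0]
    rw [Fm, ← unit_zpow_eq uK huKval τ, mul_assoc]
    rfl
  have huniq : ∀ Y : PowerSeries Rq, MirrorEq τ Y → MK Y = Y0 := by
    intro Y hY
    obtain ⟨hcc', hfix', _⟩ := mirror_to_fixed hY
    exact Fm_fixed_unique τ hcc' hcc0 hfix' hfix0
  constructor
  · refine ⟨Ysol τ, hsol, ?_⟩
    intro Y hY
    apply mapRK_injective
    rw [hMY]
    exact huniq Y hY
  · intro Y hY n hn
    have hcoe : algebraMap Rq K (PowerSeries.coeff n Y) = algebraMap Rq K (rhsPoly τ n) := by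
      rw [← PowerSeries.coeff_map]
      show coeff n (MK Y) = _
      rw [huniq Y hY]
      exact hco0 n hn
    have := IsFractionRing.injective Rq K hcoe
    rw [this]
    rfl
end I
end
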